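/- There exists a family {𝒜_α : α < 𝔠} of 𝔠 many Luzin almost disjoint families on ω such that for all α ≠ β, the Ψ-spaces Ψ(𝒜_α) and Ψ(𝒜_β) are not homeomorphic. -/

import Mathlib

set_option linter.unusedSectionVars false
open Set Cardinal

/-- An almost disjoint family on ω. -/
def ADFamily (𝒜 : Set (Set ℕ)) : Prop :=
  𝒜.Infinite ∧ (∀ A ∈ 𝒜, A.Infinite) ∧
    ∀ A ∈ 𝒜, ∀ B ∈ 𝒜, A ≠ B → (A ∩ B).Finite

/-- The Ψ-space topology on ℕ ⊕ 𝒜. -/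
def psiTop (𝒜 : Set (Set ℕ)) : TopologicalSpace (ℕ ⊕ ↥𝒜) :=
  TopologicalSpace.generateFrom
    ({U | ∃ n : ℕ, U = {Sum.inl n}} ∪
     {U | ∃ (A : ↥𝒜) (F : Finset ℕ),
        U = insert (Sum.inr A) (Sum.inl '' ((A : Set ℕ) \ ↑F))})

/-- An AD family is Luzin if it can be enumerated as ⟨A_α : α < ω₁⟩ so that for
every α < ω₁ and every n ∈ ω, {β < α : A_α ∩ A_β ⊆ n} is finite. -/
def IsLuzinFamily (𝒜 : Set (Set ℕ)) : Prop :=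
  ∃ A : {α : Ordinal.{0} // α < (Cardinal.aleph 1).ord} → Set ℕ,
    Function.Injective A ∧ Set.range A = 𝒜 ∧
    ∀ α, ∀ n : ℕ, {β | β < α ∧ A α ∩ A β ⊆ Set.Iio n}.Finite

noncomputable section
namespace LZ
open scoped Classical

def xseq (r : Set ℕ) (n : ℕ) : ℕ :=
  10 * 3 ^ (n+1) + ∑ i ∈ Finset.range n, if i ∈ r then 3 ^ (n - 1 - i) else 0

lemma geom_lt (n : ℕ) : ∑ j ∈ Finset.range n, 3 ^ j < 3 ^ n := by
  induction n with
  | zero => simp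
  | succ n ih =>
    rw [Finset.sum_range_succ, pow_succ]
    omega

lemma sum_digits_le (r : Set ℕ) (n : ℕ) :
    (∑ i ∈ Finset.range n, if i ∈ r then 3 ^ (n - 1 - i) else 0) < 3 ^ n := by
  calc (∑ i ∈ Finset.range n, if i ∈ r then 3 ^ (n - 1 - i) else 0)
      ≤ ∑ i ∈ Finset.range n, 3 ^ (n - 1 - i) := by
        apply Finset.sum_le_sum; intro i _; split <;> simp
    _ = ∑ i ∈ Finset.range n, 3 ^ i := Finset.sum_range_reflect (fun i => 3 ^ i) n
    _ < 3 ^ n := geom_lt n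

lemma xseq_lb (r : Set ℕ) (n : ℕ) : 10 * 3 ^ (n+1) ≤ xseq r n := Nat.le_add_right _ _

lemma xseq_ub (r : Set ℕ) (n : ℕ) : xseq r n < 11 * 3 ^ (n+1) := by
  have h := sum_digits_le r n
  have h3 : (3:ℕ) ^ n ≤ 3 ^ (n+1) := Nat.pow_le_pow_right (by norm_num) (by omega)
  unfold xseq; omega

lemma xseq_strictMono (r : Set ℕ) : StrictMono (xseq r) := by
  intro m n hmn
  have h1 := xseq_ub r m
  have h2 := xseq_lb r n
  have : 11 * 3 ^ (m+1) ≤ 10 * 3 ^ (n+1) := by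
    have : (3:ℕ) ^ (m+1) * 3 ≤ 3 ^ (n+1) := by
      rw [← pow_succ]
      exact Nat.pow_le_pow_right (by norm_num) (by omega)
    nlinarith
  omega

/-- key digit separation on the diagonal -/
lemma xseq_diag_sep {r s : Set ℕ} {i0 : ℕ} (hr : i0 ∈ r) (hs : i0 ∉ s)
    (hlow : ∀ i < i0, (i ∈ r ↔ i ∈ s)) {n : ℕ} (hn : i0 + 1 < n) :
    xseq s n + 3 ^ (n - 2 - i0) ≤ xseq r n := by
  set f : ℕ → ℕ := fun i => if i ∈ r then 3 ^ (n - 1 - i) else 0 with hf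
  set g : ℕ → ℕ := fun i => if i ∈ s then 3 ^ (n - 1 - i) else 0 with hg
  have hsplit : ∀ (h : ℕ → ℕ), ∑ i ∈ Finset.range n, h i
      = (∑ i ∈ Finset.range i0, h i) + h i0 + ∑ i ∈ Finset.Ico (i0+1) n, h i := by
    intro h
    rw [Finset.range_eq_Ico, ← Finset.sum_Ico_consecutive h (by omega : 0 ≤ i0 + 1) (by omega : i0 + 1 ≤ n),
      ← Finset.range_eq_Ico, Finset.sum_range_succ]
  have hC : ∑ i ∈ Finset.range i0, f i = ∑ i ∈ Finset.range i0, g i := by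
    apply Finset.sum_congr rfl
    intro i hi
    simp only [Finset.mem_range] at hi
    simp only [hf, hg]
    by_cases h : i ∈ r
    · rw [if_pos h, if_pos ((hlow i hi).mp h)]
    · rw [if_neg h, if_neg (fun hh => h ((hlow i hi).mpr hh))]
  have hfi0 : f i0 = 3 ^ (n - 1 - i0) := if_pos hr
  have hgi0 : g i0 = 0 := if_neg hs
  -- tail bound for g
  have htail : ∑ i ∈ Finset.Ico (i0+1) n, g i ≤ ∑ j ∈ Finset.range (n - 1 - i0), 3 ^ j := by
    have h1 : ∑ i ∈ Finset.Ico (i0+1) n, g i ≤ ∑ i ∈ Finset.Ico (i0+1) n, 3 ^ (n - 1 - i) := by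
      apply Finset.sum_le_sum; intro i _; simp only [hg]; split <;> simp
    have h2 : ∑ i ∈ Finset.Ico (i0+1) n, (3:ℕ) ^ (n - 1 - i)
        = ∑ i ∈ Finset.range (n - (i0+1)), 3 ^ (n - 1 - (i0 + 1 + i)) := by
      rw [Finset.sum_Ico_eq_sum_range]
    have h3 : ∑ i ∈ Finset.range (n - (i0+1)), (3:ℕ) ^ (n - 1 - (i0 + 1 + i))
        = ∑ i ∈ Finset.range (n - 1 - i0), 3 ^ (n - 1 - i0 - 1 - i) := by
      rw [show n - (i0+1) = n - 1 - i0 from by omega]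
      apply Finset.sum_congr rfl
      intro i _; congr 1; omega
    have h4 : ∑ i ∈ Finset.range (n - 1 - i0), (3:ℕ) ^ (n - 1 - i0 - 1 - i)
        = ∑ j ∈ Finset.range (n - 1 - i0), 3 ^ j := Finset.sum_range_reflect (fun j => 3^j) _
    omega
  -- main inequality : geom sum + 3^(k-1) ≤ 3^k for k = n-1-i0 ≥ 1
  have hk : 1 ≤ n - 1 - i0 := by omega
  have hgeom : (∑ j ∈ Finset.range (n - 1 - i0), (3:ℕ) ^ j) + 3 ^ (n - 2 - i0) ≤ 3 ^ (n - 1 - i0) := by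
    obtain ⟨m, hm⟩ : ∃ m, n - 1 - i0 = m + 1 := ⟨n - 2 - i0, by omega⟩
    rw [hm, Finset.sum_range_succ]
    have h5 : n - 2 - i0 = m := by omega
    rw [h5, pow_succ]
    have := geom_lt m
    omega
  have e1 : xseq r n = 10 * 3 ^ (n+1) + ((∑ i ∈ Finset.range i0, f i) + 3 ^ (n - 1 - i0) + ∑ i ∈ Finset.Ico (i0+1) n, f i) := by
    rw [xseq, hsplit f, hfi0]
  have e2 : xseq s n = 10 * 3 ^ (n+1) + ((∑ i ∈ Finset.range i0, g i) + 0 + ∑ i ∈ Finset.Ico (i0+1) n, g i) := by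
    rw [xseq, hsplit g, hgi0]
  omega

/-- full separation lemma -/
lemma xseq_sep {r s : Set ℕ} (hrs : r ≠ s) (c : ℕ) :
    ∃ N, ∀ n, N ≤ n → ∀ m, c < Nat.dist (xseq r n) (xseq s m) := by
  have hex : ∃ i, ¬(i ∈ r ↔ i ∈ s) := by
    by_contra h
    push_neg at h
    exact hrs (Set.ext fun i => h i)
  classical
  let i0 := Nat.find hex
  have hi0 : ¬(i0 ∈ r ↔ i0 ∈ s) := Nat.find_spec hex
  have hlow : ∀ i < i0, (i ∈ r ↔ i ∈ s) := fun i hi => not_not.mp (Nat.find_min hex hi)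
  refine ⟨i0 + c + 2, fun n hn m => ?_⟩
  have hcn : c < 3 ^ (n - 2 - i0) := by
    calc c ≤ n - 2 - i0 := by omega
    _ < 3 ^ (n - 2 - i0) := Nat.lt_pow_self (by norm_num : 1 < 3)
  rcases lt_trichotomy m n with hmn | hmn | hmn
  · -- m < n : interval separation
    have h1 : xseq s m < 11 * 3 ^ (m+1) := xseq_ub s m
    have h2 : 10 * 3 ^ (n+1) ≤ xseq r n := xseq_lb r n
    have h3 : (11:ℕ) * 3 ^ (m+1) + 3 ^ n ≤ 10 * 3 ^ (n+1) := by
      have hp : (3:ℕ) ^ (m+1) ≤ 3 ^ n := Nat.pow_le_pow_right (by norm_num) (by omega)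
      have : (10:ℕ) * 3 ^ (n+1) = 30 * 3 ^ n := by ring
      omega
    have hub : xseq s m + 3 ^ n ≤ xseq r n := by omega
    have hcn' : c < 3 ^ n := by
      calc c < 3 ^ (n - 2 - i0) := hcn
      _ ≤ 3 ^ n := Nat.pow_le_pow_right (by norm_num) (by omega)
    have := Nat.dist_eq_sub_of_le (le_trans (Nat.le_add_right _ _) hub)
    rw [Nat.dist_comm] at this
    omega
  · -- m = n : diagonal
    subst hmn
    have hd : xseq s m + 3 ^ (m - 2 - i0) ≤ xseq r m ∨ xseq r m + 3 ^ (m - 2 - i0) ≤ xseq s m := by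
      by_cases h : i0 ∈ r
      · have hs' : i0 ∉ s := fun hh => hi0 ⟨fun _ => hh, fun _ => h⟩
        exact Or.inl (xseq_diag_sep h hs' hlow (by omega))
      · have hs' : i0 ∈ s := by
          by_contra hh
          exact hi0 ⟨fun h1 => absurd h1 h, fun h2 => absurd h2 hh⟩
        exact Or.inr (xseq_diag_sep hs' h (fun i hi => (hlow i hi).symm) (by omega))
    rcases hd with h | h
    · have := Nat.dist_eq_sub_of_le (le_trans (Nat.le_add_right _ _) h)
      rw [Nat.dist_comm] at this
      omega
    · have := Nat.dist_eq_sub_of_le (le_trans (Nat.le_add_right _ _) h)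
      omega
  · -- n < m
    have h1 : xseq r n < 11 * 3 ^ (n+1) := xseq_ub r n
    have h2 : 10 * 3 ^ (m+1) ≤ xseq s m := xseq_lb s m
    have h3 : (11:ℕ) * 3 ^ (n+1) + 3 ^ n ≤ 10 * 3 ^ (m+1) := by
      have hp : (3:ℕ) ^ (n+2) ≤ 3 ^ (m+1) := Nat.pow_le_pow_right (by norm_num) (by omega)
      have e1 : (3:ℕ) ^ (n+2) = 9 * 3 ^ n := by ring
      have e2 : (11:ℕ) * 3 ^ (n+1) = 33 * 3 ^ n := by ring
      omega
    have hub : xseq r n + 3 ^ n ≤ xseq s m := by omega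
    have hcn' : c < 3 ^ n := by
      calc c < 3 ^ (n - 2 - i0) := hcn
      _ ≤ 3 ^ n := Nat.pow_le_pow_right (by norm_num) (by omega)
    have := Nat.dist_eq_sub_of_le (le_trans (Nat.le_add_right _ _) hub)
    omega

def Xset (r : Set ℕ) : Set ℕ := Set.range (xseq r)

lemma Xset_infinite (r : Set ℕ) : (Xset r).Infinite :=
  Set.infinite_range_of_injective (xseq_strictMono r).injective

lemma Xset_sep {r s : Set ℕ} (hrs : r ≠ s) (c : ℕ) :
    ∃ N, ∀ x ∈ Xset r, N ≤ x → ∀ y ∈ Xset s, c < Nat.dist x y := by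
  obtain ⟨N, hN⟩ := xseq_sep hrs c
  refine ⟨xseq r N, ?_⟩
  rintro x ⟨n, rfl⟩ hx y ⟨m, rfl⟩
  exact hN n ((xseq_strictMono r).le_iff_le.mp hx) m

lemma Xset_inj {r s : Set ℕ} (h : Xset r = Xset s) : r = s := by
  by_contra hrs
  obtain ⟨N, hN⟩ := Xset_sep hrs 0
  have hx : xseq r (max N 0) ∈ Xset r := ⟨_, rfl⟩
  have hge : N ≤ xseq r (max N 0) := le_trans (le_max_left _ _) ((xseq_strictMono r).le_apply)
  have := hN _ hx hge _ (h ▸ hx)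
  simp [Nat.dist_self] at this

/-! ### the chunk construction -/

section NextA
variable (X : Set ℕ) (g : ℕ → Set ℕ)

/-- admissible points for chunk `n`, above bound `b` -/
def PX (n b : ℕ) : ℕ → Prop := fun x => x ∈ g n ∧ (∀ m < n, x ∉ g m) ∧ b ≤ x

/-- the bound for chunk `n` given accumulated finite set `prev` -/
def bnd (n : ℕ) (prev : Finset ℕ) : ℕ := n + 1 + prev.sup id

/-- target size for chunk `n` -/
def tgt (n : ℕ) (prev : Finset ℕ) : ℕ :=
  let junk := (prev.filter (· ∈ g n)).card
  if h : ∃ x, x ∈ X ∧ junk + n < x then Nat.find h - junk else 0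

/-- chunk `n` given accumulated set -/
def step (n : ℕ) (prev : Finset ℕ) : Finset ℕ :=
  (Finset.range (tgt X g n prev)).image (Nat.nth (PX g n (bnd n prev)))

/-- accumulated union of chunks below `n` -/
def acc : ℕ → Finset ℕ
  | 0 => ∅
  | n+1 => acc n ∪ step X g n (acc n)

def chunk (n : ℕ) : Finset ℕ := step X g n (acc X g n)

def nextA : Set ℕ := {x | ∃ n, x ∈ chunk X g n}

variable {X g}
variable (hX : X.Infinite) (hginf : ∀ n, (g n).Infinite)
  (hgad : ∀ m n, m ≠ n → (g n ∩ g m).Finite)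

include hginf hgad in
lemma PX_infinite (n b : ℕ) : {x | PX g n b x}.Infinite := by
  have : {x | PX g n b x} = ((g n \ ⋃ m ∈ Finset.range n, (g n ∩ g m)) \ Set.Iio b) := by
    ext x
    simp only [PX, Set.mem_setOf_eq, Set.mem_diff, Set.mem_iUnion, Set.mem_inter_iff,
      Set.mem_Iio, Finset.mem_range, not_lt, not_exists, not_and]
    constructor
    · rintro ⟨h1, h2, h3⟩
      exact ⟨⟨h1, fun m hm => fun _ hh => (h2 m hm) hh⟩, h3⟩
    · rintro ⟨⟨h1, h2⟩, h3⟩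
      exact ⟨h1, fun m hm hh => h2 m hm h1 hh, h3⟩
  rw [this]
  apply Set.Infinite.diff _ (Set.finite_Iio b)
  apply Set.Infinite.diff (hginf n)
  apply Set.Finite.biUnion (Finset.finite_toSet _)
  intro m hm
  simp only [Finset.coe_range, Set.mem_Iio] at hm
  exact hgad m n (by omega)

include hX in
lemma tgt_spec (n : ℕ) (prev : Finset ℕ) :
    (prev.filter (· ∈ g n)).card + tgt X g n prev ∈ X ∧
      (prev.filter (· ∈ g n)).card + n < (prev.filter (· ∈ g n)).card + tgt X g n prev := by
  classical
  set junk := (prev.filter (· ∈ g n)).card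
  have h : ∃ x, x ∈ X ∧ junk + n < x := by
    obtain ⟨x, hx1, hx2⟩ := hX.exists_gt (junk + n)
    exact ⟨x, hx1, hx2⟩
  rw [tgt, dif_pos h]
  obtain ⟨h1, h2⟩ := Nat.find_spec h
  have : junk + (Nat.find h - junk) = Nat.find h := by omega
  rw [this]
  exact ⟨h1, h2⟩

include hX in
lemma tgt_pos (n : ℕ) (prev : Finset ℕ) : 0 < tgt X g n prev := by
  have := (tgt_spec (g := g) hX n prev).2
  omega

include hginf hgad in
/-- members of chunk n satisfy the PX predicate -/
lemma chunk_mem {n x : ℕ} (hx : x ∈ chunk X g n) : PX g n (bnd n (acc X g n)) x := by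
  simp only [chunk, step, Finset.mem_image, Finset.mem_range] at hx
  obtain ⟨k, _, rfl⟩ := hx
  exact Nat.nth_mem_of_infinite (PX_infinite hginf hgad n _) k

include hX hginf hgad in
lemma chunk_card (n : ℕ) : (chunk X g n).card = tgt X g n (acc X g n) := by
  rw [chunk, step, Finset.card_image_of_injective _
    (Nat.nth_injective (PX_infinite hginf hgad n _)), Finset.card_range]

include hX hginf hgad in
lemma chunk_nonempty (n : ℕ) : (chunk X g n).Nonempty := by
  rw [← Finset.card_pos, chunk_card hX hginf hgad]
  exact tgt_pos hX n _

/-- elements of acc are below the bound -/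
lemma acc_lt_bnd {n x : ℕ} (hx : x ∈ acc X g n) : x < bnd n (acc X g n) := by
  have : x ≤ (acc X g n).sup id := Finset.le_sup (f := id) hx
  simp only [bnd]; omega

include hginf hgad in
lemma chunk_disj_acc (n : ℕ) : ∀ x ∈ chunk X g n, x ∉ acc X g n := by
  intro x hx hxa
  have h1 := (chunk_mem hginf hgad hx).2.2
  exact absurd (acc_lt_bnd hxa) (not_lt.mpr h1)

lemma acc_eq_union (n : ℕ) : (acc X g n : Set ℕ) = ⋃ m ∈ Finset.range n, (chunk X g m : Set ℕ) := by
  induction n with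
  | zero => simp [acc]
  | succ n ih =>
    simp only [acc, Finset.coe_union, ih]
    ext x
    simp only [Set.mem_union, Set.mem_iUnion, Finset.mem_range, Finset.mem_coe]
    constructor
    · rintro (⟨m, hm, hx⟩ | hx)
      · exact ⟨m, by omega, hx⟩
      · exact ⟨n, by omega, hx⟩
    · rintro ⟨m, hm, hx⟩
      rcases Nat.lt_succ_iff_lt_or_eq.mp hm with h | h
      · exact Or.inl ⟨m, h, hx⟩
      · subst h; exact Or.inr hx

include hginf hgad in
lemma chunk_subset (n : ℕ) : (chunk X g n : Set ℕ) ⊆ g n := fun _ hx => (chunk_mem hginf hgad hx).1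

include hginf hgad in
lemma chunk_disj_g {m n : ℕ} (h : m < n) : ∀ x ∈ chunk X g n, x ∉ g m :=
  fun _ hx => (chunk_mem hginf hgad hx).2.1 m h

include hginf hgad in
lemma nextA_inter (k : ℕ) :
    nextA X g ∩ g k = (↑((acc X g k).filter (· ∈ g k)) ∪ ↑(chunk X g k) : Set ℕ) := by
  classical
  ext x
  simp only [nextA, Set.mem_inter_iff, Set.mem_setOf_eq, Set.mem_union, Finset.coe_filter,
    Set.mem_setOf_eq, Finset.mem_coe]
  constructor
  · rintro ⟨⟨n, hn⟩, hxg⟩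
    rcases lt_trichotomy n k with h | h | h
    · left
      refine ⟨?_, hxg⟩
      have := acc_eq_union (X := X) (g := g) k
      have hx : x ∈ ⋃ m ∈ Finset.range k, (chunk X g m : Set ℕ) := by
        simp only [Set.mem_iUnion, Finset.mem_range]
        exact ⟨n, h, hn⟩
      rw [← this] at hx
      exact hx
    · subst h; exact Or.inr hn
    · exact absurd hxg (chunk_disj_g hginf hgad h x hn)
  · rintro (⟨hx, hxg⟩ | hx)
    · have := acc_eq_union (X := X) (g := g) k
      rw [Set.ext_iff] at this
      obtain ⟨m, hm, hx'⟩ := by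
        have := (this x).mp hx
        simpa only [Set.mem_iUnion, Finset.mem_range] using this
      exact ⟨⟨m, hx'⟩, hxg⟩
    · exact ⟨⟨k, hx⟩, chunk_subset hginf hgad k hx⟩

include hX hginf hgad in
lemma nextA_inter_finite (k : ℕ) : (nextA X g ∩ g k).Finite := by
  rw [nextA_inter hginf hgad]
  exact Set.Finite.union (Finset.finite_toSet _) (Finset.finite_toSet _)

include hX hginf hgad in
lemma nextA_inter_card (k : ℕ) :
    (nextA X g ∩ g k).ncard ∈ X ∧ k < (nextA X g ∩ g k).ncard := by
  classical
  have hdisj : Disjoint (((acc X g k).filter (· ∈ g k)) : Finset ℕ) (chunk X g k) := by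
    rw [Finset.disjoint_left]
    intro x hx hx'
    exact chunk_disj_acc hginf hgad k x hx' (Finset.mem_filter.mp hx).1
  have : (nextA X g ∩ g k).ncard
      = ((acc X g k).filter (· ∈ g k)).card + (chunk X g k).card := by
    rw [nextA_inter hginf hgad, ← Finset.coe_union, Set.ncard_coe_finset,
      Finset.card_union_of_disjoint hdisj]
  rw [this, chunk_card hX hginf hgad]
  obtain ⟨h1, h2⟩ := tgt_spec (g := g) hX k (acc X g k)
  exact ⟨h1, by omega⟩

include hX hginf hgad in
lemma nextA_luzin (k : ℕ) : ∃ y ∈ nextA X g ∩ g k, k ≤ y := by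
  obtain ⟨y, hy⟩ := chunk_nonempty hX hginf hgad k
  have hP := chunk_mem hginf hgad hy
  refine ⟨y, ⟨⟨k, hy⟩, hP.1⟩, ?_⟩
  have := hP.2.2
  simp only [bnd] at this
  omega

include hX hginf hgad in
lemma nextA_infinite : (nextA X g).Infinite := by
  apply Set.infinite_of_not_bddAbove
  rintro ⟨B, hB⟩
  obtain ⟨y, hy⟩ := chunk_nonempty hX hginf hgad (B+1)
  have hP := chunk_mem hginf hgad hy
  have : y ∈ nextA X g := ⟨B+1, hy⟩
  have := hB this
  have hb := hP.2.2
  simp only [bnd] at hb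
  omega

end NextA

/-! ### the transfinite construction -/

def ω1 : Ordinal.{0} := (Cardinal.aleph 1).ord

def initA (n : ℕ) : Set ℕ := Set.range (fun m => Nat.pair n m)

lemma initA_infinite (n : ℕ) : (initA n).Infinite :=
  Set.infinite_range_of_injective (fun a b h => by
    simpa using (Nat.pair_eq_pair.mp h).2)

lemma initA_disjoint {m n : ℕ} (h : m ≠ n) : initA m ∩ initA n = ∅ := by
  ext x
  simp only [initA, Set.mem_inter_iff, Set.mem_range, Set.mem_empty_iff_false, iff_false,
    not_and]
  rintro ⟨a, rfl⟩ ⟨b, hb⟩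
  exact h (Nat.pair_eq_pair.mp hb.symm).1

lemma countable_equiv {α : Ordinal.{0}} (h1 : ¬ α < Ordinal.omega0) (h2 : α < ω1) :
    Nonempty (ℕ ≃ {β : Ordinal.{0} // β < α}) := by
  have hcard : α.card ≤ ℵ₀ := by
    have := Cardinal.lt_ord.mp h2
    rwa [← Cardinal.succ_aleph0, Order.lt_succ_iff] at this
  have hcard2 : ℵ₀ ≤ α.card := by
    have := Ordinal.card_le_card (le_of_not_gt h1)
    rwa [Ordinal.card_omega0] at this
  have hc : α.card = ℵ₀ := le_antisymm hcard hcard2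
  have hmk : #(Set.Iio α) = Cardinal.lift.{1} α.card := Ordinal.mk_Iio_ordinal α
  rw [hc] at hmk
  have : Cardinal.lift.{1} #ℕ = Cardinal.lift.{0} #(Set.Iio α) := by
    rw [hmk, Cardinal.mk_nat]
    simp
  exact Cardinal.lift_mk_eq'.mp this

def enumOf (α : Ordinal.{0}) (h1 : ¬ α < Ordinal.omega0) (h2 : α < ω1) :
    ℕ ≃ {β : Ordinal.{0} // β < α} :=
  Classical.choice (countable_equiv h1 h2)

def famA (X : Set ℕ) : Ordinal.{0} → Set ℕ :=
  Ordinal.lt_wf.fix (C := fun _ => Set ℕ) fun α rec =>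
    if h1 : α < Ordinal.omega0 then initA (Classical.choose (Ordinal.lt_omega0.mp h1))
    else if h2 : α < ω1 then
      nextA X (fun k => rec (enumOf α h1 h2 k).1 (enumOf α h1 h2 k).2)
    else ∅

lemma famA_eq_initA {X : Set ℕ} {α : Ordinal.{0}} (h1 : α < Ordinal.omega0) :
    famA X α = initA (Classical.choose (Ordinal.lt_omega0.mp h1)) := by
  rw [famA, WellFounded.fix_eq]
  simp only [dif_pos h1]

lemma famA_eq_nextA {X : Set ℕ} {α : Ordinal.{0}} (h1 : ¬ α < Ordinal.omega0) (h2 : α < ω1) :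
    famA X α = nextA X (fun k => famA X (enumOf α h1 h2 k).1) := by
  conv_lhs => rw [famA, WellFounded.fix_eq]
  simp only [dif_neg h1, dif_pos h2]
  rfl

lemma famA_nat {X : Set ℕ} (n : ℕ) : famA X (n : Ordinal) = initA n := by
  have h1 : (n : Ordinal) < Ordinal.omega0 := Ordinal.nat_lt_omega0 n
  rw [famA_eq_initA h1]
  congr 1
  have := Classical.choose_spec (Ordinal.lt_omega0.mp h1)
  exact (Nat.cast_inj.mp this).symm

lemma ordinal_Iio_nat_finite (n : ℕ) : {β : Ordinal.{0} | β < (n : Ordinal)}.Finite := by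
  apply Set.Finite.subset (Set.Finite.image (fun m : ℕ => (m : Ordinal)) (Set.finite_Iio n))
  intro β hβ
  have hβω : β < Ordinal.omega0 := lt_trans hβ (Ordinal.nat_lt_omega0 n)
  obtain ⟨m, rfl⟩ := Ordinal.lt_omega0.mp hβω
  exact ⟨m, (by simpa using hβ), rfl⟩

section FamA
variable {X : Set ℕ} (hX : X.Infinite)

include hX in
lemma famA_good : ∀ α : Ordinal.{0}, ∀ (h2 : α < ω1),
    (famA X α).Infinite ∧
    ∀ β, β < α → (famA X α ∩ famA X β).Finite ∧ famA X α ≠ famA X β ∧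
      (∀ (h1 : ¬ α < Ordinal.omega0), (famA X α ∩ famA X β).ncard ∈ X ∧
        ∃ k : ℕ, β = ((enumOf α h1 h2 k : {β // β < α}) : _).1 ∧
          k < (famA X α ∩ famA X β).ncard ∧
          ∃ y ∈ famA X α ∩ famA X β, k ≤ y) := by
  intro α
  induction α using Ordinal.induction with
  | _ α IH =>
  intro h2
  by_cases h1 : α < Ordinal.omega0
  · -- base case : α finite
    obtain ⟨n, rfl⟩ := Ordinal.lt_omega0.mp h1
    rw [famA_nat]
    refine ⟨initA_infinite n, ?_⟩
    intro β hβ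
    obtain ⟨m, rfl⟩ := Ordinal.lt_omega0.mp (lt_trans hβ (Ordinal.nat_lt_omega0 n))
    have hmn : m ≠ n := by
      have := Nat.cast_lt.mp hβ; omega
    rw [famA_nat]
    have hd : initA n ∩ initA m = ∅ := by rw [Set.inter_comm]; exact initA_disjoint hmn
    refine ⟨by rw [hd]; exact Set.finite_empty, ?_, fun h1' => absurd h1 h1'⟩
    intro he
    have hemp : initA n = ∅ := by rw [← hd, ← he, Set.inter_self]
    exact (initA_infinite n) (by rw [hemp]; exact Set.finite_empty)
  · -- step case : ω ≤ α
    rw [famA_eq_nextA h1 h2]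
    set e := enumOf α h1 h2 with he
    set g := fun k => famA X ((e k : {β // β < α}) : Ordinal) with hg
    have hβω1 : ∀ {β : Ordinal.{0}}, β < α → β < ω1 := fun hβ => lt_trans hβ h2
    have hginf : ∀ k, (g k).Infinite := fun k => (IH _ (e k).2 (hβω1 (e k).2)).1
    have hgad : ∀ m n, m ≠ n → (g n ∩ g m).Finite := by
      intro m n hmn
      have hne' : ((e n : {β // β < α}) : Ordinal) ≠ ((e m : {β // β < α}) : Ordinal) := by
        intro h
        exact hmn (e.injective (Subtype.ext h)).symm
      rcases lt_or_gt_of_ne hne' with h | h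
      · have := ((IH _ (e m).2 (hβω1 (e m).2)).2 _ h).1
        rw [Set.inter_comm] at this; exact this
      · exact ((IH _ (e n).2 (hβω1 (e n).2)).2 _ h).1
    refine ⟨nextA_infinite hX hginf hgad, ?_⟩
    intro β hβ
    set k := e.symm ⟨β, hβ⟩ with hk
    have hβk : β = ((e k : {β // β < α}) : Ordinal) := by rw [hk, Equiv.apply_symm_apply]
    have hgk : famA X β = g k := by rw [hβk]
    rw [hgk]
    have hfin : (nextA X g ∩ g k).Finite := nextA_inter_finite hX hginf hgad k
    have hcard := nextA_inter_card hX hginf hgad k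
    have hluz := nextA_luzin hX hginf hgad k
    refine ⟨hfin, ?_, fun _ => ⟨hcard.1, k, hβk, hcard.2, hluz⟩⟩
    intro heq
    rw [heq, Set.inter_self] at hfin
    exact (hginf k) hfin

include hX in
lemma famA_infinite {α : Ordinal.{0}} (hα : α < ω1) : (famA X α).Infinite :=
  (famA_good hX α hα).1

include hX in
lemma famA_inter_finite {α β : Ordinal.{0}} (hα : α < ω1) (hβ : β < α) :
    (famA X α ∩ famA X β).Finite :=
  ((famA_good hX α hα).2 β hβ).1

include hX in
lemma famA_inj {α β : Ordinal.{0}} (hα : α < ω1) (hβ : β < ω1) (hne : α ≠ β) :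
    famA X α ≠ famA X β := by
  rcases lt_or_gt_of_ne hne with h | h
  · exact fun hh => ((famA_good hX β hβ).2 α h).2.1 hh.symm
  · exact ((famA_good hX α hα).2 β h).2.1

include hX in
lemma famA_ncard_mem {α β : Ordinal.{0}} (hα : α < ω1) (h1 : ¬ α < Ordinal.omega0)
    (hβ : β < α) : (famA X α ∩ famA X β).ncard ∈ X :=
  ((((famA_good hX α hα).2 β hβ).2.2) h1).1

include hX in
lemma famA_luzin {α : Ordinal.{0}} (hα : α < ω1) (n : ℕ) :
    {β : Ordinal.{0} | β < α ∧ famA X α ∩ famA X β ⊆ Set.Iio n}.Finite := by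
  by_cases h1 : α < Ordinal.omega0
  · obtain ⟨m, rfl⟩ := Ordinal.lt_omega0.mp h1
    exact (ordinal_Iio_nat_finite m).subset (fun β hβ => hβ.1)
  · apply Set.Finite.subset
      ((Set.finite_Iio n).image (fun k : ℕ => ((enumOf α h1 hα k : {β // β < α}) : Ordinal)))
    rintro β ⟨hβ, hsub⟩
    obtain ⟨hX', k, hβk, _, y, hy, hky⟩ := (((famA_good hX α hα).2 β hβ).2.2) h1
    have hyn : y < n := hsub hy
    exact ⟨k, Set.mem_Iio.mpr (by omega), hβk.symm⟩

include hX in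
lemma famA_sizes {α : Ordinal.{0}} (hα : α < ω1) (h1 : ¬ α < Ordinal.omega0) (n : ℕ) :
    {β : Ordinal.{0} | β < α ∧ (famA X α ∩ famA X β).ncard ≤ n}.Finite := by
  apply Set.Finite.subset
    ((Set.finite_Iio n).image (fun k : ℕ => ((enumOf α h1 hα k : {β // β < α}) : Ordinal)))
  rintro β ⟨hβ, hsz⟩
  obtain ⟨hX', k, hβk, hklt, _⟩ := (((famA_good hX α hα).2 β hβ).2.2) h1
  exact ⟨k, Set.mem_Iio.mpr (by omega), hβk.symm⟩

end FamA

variable {𝒜 ℬ : Set (Set ℕ)}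

lemma psi_isOpen_inl (n : ℕ) : (psiTop 𝒜).IsOpen {Sum.inl n} :=
  TopologicalSpace.GenerateOpen.basic _ (Or.inl ⟨n, rfl⟩)

lemma psi_isOpen_basic (A : ↥𝒜) (F : Finset ℕ) :
    (psiTop 𝒜).IsOpen (insert (Sum.inr A) (Sum.inl '' ((A : Set ℕ) \ ↑F))) :=
  TopologicalSpace.GenerateOpen.basic _ (Or.inr ⟨A, F, rfl⟩)

lemma psi_nbhd {U : Set (ℕ ⊕ ↥𝒜)} (hU : (psiTop 𝒜).IsOpen U) (A : ↥𝒜)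
    (hA : Sum.inr A ∈ U) : ∃ F : Finset ℕ, ∀ x ∈ (A : Set ℕ) \ ↑F, Sum.inl x ∈ U := by
  induction hU with
  | basic V hV =>
    rcases hV with ⟨n, rfl⟩ | ⟨A', F, rfl⟩
    · simp at hA
    · have : A = A' := by
        rcases hA with h | h
        · exact (Sum.inr_injective h).symm ▸ rfl
        · simp only [Set.mem_image] at h
          obtain ⟨x, _, hx⟩ := h
          exact absurd hx (by simp)
      subst this
      exact ⟨F, fun x hx => Or.inr ⟨x, hx, rfl⟩⟩
  | univ => exact ⟨∅, fun x _ => trivial⟩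
  | inter U V _ _ ihU ihV =>
    obtain ⟨F, hF⟩ := ihU hA.1
    obtain ⟨G, hG⟩ := ihV hA.2
    refine ⟨F ∪ G, fun x hx => ?_⟩
    simp only [Finset.coe_union, Set.mem_diff, Set.mem_union, not_or] at hx
    exact ⟨hF x ⟨hx.1, hx.2.1⟩, hG x ⟨hx.1, hx.2.2⟩⟩
  | sUnion S _ ih =>
    obtain ⟨V, hV, hAV⟩ := hA
    obtain ⟨F, hF⟩ := ih V hV hAV
    exact ⟨F, fun x hx => ⟨V, hV, hF x hx⟩⟩

lemma psi_not_isolated (h𝒜 : ∀ A ∈ 𝒜, A.Infinite) (A : ↥𝒜) :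
    ¬ (psiTop 𝒜).IsOpen {Sum.inr A} := by
  intro h
  obtain ⟨F, hF⟩ := psi_nbhd h A rfl
  obtain ⟨x, hx⟩ := ((h𝒜 A A.2).diff (F.finite_toSet)).nonempty
  exact absurd (hF x hx) (by simp)

section Homeo
attribute [-instance] instTopologicalSpaceSum
local instance (𝒞 : Set (Set ℕ)) : TopologicalSpace (ℕ ⊕ ↥𝒞) := psiTop 𝒞
variable (h : @Homeomorph (ℕ ⊕ ↥𝒜) (ℕ ⊕ ↥ℬ) (psiTop 𝒜) (psiTop ℬ))

include h in
lemma homeo_inl (hℬ : ∀ B ∈ ℬ, B.Infinite) (n : ℕ) : ∃ m : ℕ, h (Sum.inl n) = Sum.inl m := by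
  letI := psiTop 𝒜
  letI := psiTop ℬ
  rcases hn : h (Sum.inl n) with m | B
  · exact ⟨m, rfl⟩
  · exfalso
    have hopen : IsOpen (h '' {Sum.inl n}) := h.isOpenMap _ (psi_isOpen_inl n)
    rw [Set.image_singleton, hn] at hopen
    exact psi_not_isolated hℬ B hopen

include h in
lemma homeo_inr (h𝒜 : ∀ A ∈ 𝒜, A.Infinite) (A : ↥𝒜) :
    ∃ B : ↥ℬ, h (Sum.inr A) = Sum.inr B := by
  rcases hn : h (Sum.inr A) with m | B
  · exfalso
    obtain ⟨k, hk⟩ := homeo_inl h.symm h𝒜 m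
    have : h.symm (h (Sum.inr A)) = Sum.inl k := by rw [hn, hk]
    rw [h.symm_apply_apply] at this
    exact absurd this (by simp)
  · exact ⟨B, rfl⟩

include h in
lemma homeo_half (h𝒜 : ∀ A ∈ 𝒜, A.Infinite) (hℬ : ∀ B ∈ ℬ, B.Infinite)
    (σ : ℕ → ℕ) (hσ : ∀ n, h (Sum.inl n) = Sum.inl (σ n))
    (ρ : ↥𝒜 → ↥ℬ) (hρ : ∀ A, h (Sum.inr A) = Sum.inr (ρ A)) (A : ↥𝒜) :
    ∃ F : Finset ℕ, ∀ x ∈ (A : Set ℕ) \ ↑F, σ x ∈ (ρ A : Set ℕ) := by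
  letI := psiTop 𝒜
  letI := psiTop ℬ
  set U : Set (ℕ ⊕ ↥ℬ) := insert (Sum.inr (ρ A)) (Sum.inl '' ((ρ A : Set ℕ) \ ↑(∅ : Finset ℕ)))
  have hUopen : IsOpen U := psi_isOpen_basic (ρ A) ∅
  have hVopen : IsOpen (h ⁻¹' U) := hUopen.preimage h.continuous
  have hAV : Sum.inr A ∈ h ⁻¹' U := by
    simp only [Set.mem_preimage, hρ A]
    exact Set.mem_insert _ _
  obtain ⟨F, hF⟩ := psi_nbhd hVopen A hAV
  refine ⟨F, fun x hx => ?_⟩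
  have := hF x hx
  simp only [Set.mem_preimage, hσ x, U] at this
  rcases this with hc | hc
  · exact absurd hc (by simp)
  · obtain ⟨y, hy, hyx⟩ := hc
    have : y = σ x := Sum.inl_injective hyx
    subst this
    simpa using hy.1

lemma homeo_extract (h𝒜 : ∀ A ∈ 𝒜, A.Infinite) (hℬ : ∀ B ∈ ℬ, B.Infinite)
    (hne : Nonempty (@Homeomorph (ℕ ⊕ ↥𝒜) (ℕ ⊕ ↥ℬ) (psiTop 𝒜) (psiTop ℬ))) :
    ∃ (σ : ℕ → ℕ) (ρ : ↥𝒜 → ↥ℬ), Function.Injective σ ∧ Function.Injective ρ ∧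
      ∀ A : ↥𝒜, ∃ F G : Finset ℕ,
        (∀ x ∈ (A : Set ℕ) \ ↑F, σ x ∈ (ρ A : Set ℕ)) ∧
        (∀ y ∈ (ρ A : Set ℕ) \ ↑G, ∃ x ∈ (A : Set ℕ), σ x = y) := by
  obtain ⟨h⟩ := hne
  choose σ hσ using homeo_inl h hℬ
  choose τ hτ using homeo_inl h.symm h𝒜
  choose ρ hρ using homeo_inr h h𝒜
  choose ρ' hρ' using homeo_inr h.symm hℬ
  have hστ : ∀ m, σ (τ m) = m := by
    intro m
    have : h (h.symm (Sum.inl m)) = Sum.inl m := h.apply_symm_apply _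
    rw [hτ m, hσ (τ m)] at this
    exact Sum.inl_injective this
  have hρρ' : ∀ A, ρ' (ρ A) = A := by
    intro A
    have : h.symm (h (Sum.inr A)) = Sum.inr A := h.symm_apply_apply _
    rw [hρ A, hρ' (ρ A)] at this
    exact Sum.inr_injective this
  refine ⟨σ, ρ, ?_, ?_, ?_⟩
  · intro a b hab
    have : h (Sum.inl a) = h (Sum.inl b) := by rw [hσ a, hσ b, hab]
    exact Sum.inl_injective (h.injective this)
  · intro A B hAB
    have : h (Sum.inr A) = h (Sum.inr B) := by rw [hρ A, hρ B, hAB]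
    exact Sum.inr_injective (h.injective this)
  · intro A
    obtain ⟨F, hF⟩ := homeo_half h h𝒜 hℬ σ hσ ρ hρ A
    obtain ⟨G, hG⟩ := homeo_half h.symm hℬ h𝒜 τ hτ ρ' hρ' (ρ A)
    refine ⟨F, G, hF, fun y hy => ?_⟩
    have := hG y hy
    rw [hρρ' A] at this
    exact ⟨τ y, this, hστ y⟩

end Homeo

/-! ### the families and the main argument -/

abbrev Iw : Type 1 := {α : Ordinal.{0} // α < ω1}

def fam (X : Set ℕ) : Set (Set ℕ) := Set.range (fun α : Iw => famA X α.1)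

lemma omega0_lt_ω1 : Ordinal.omega0 < ω1 := by
  have h := Cardinal.ord_lt_ord.mpr Cardinal.aleph0_lt_aleph_one
  rwa [Cardinal.ord_aleph0] at h

instance : Infinite Iw :=
  Infinite.of_injective (fun n : ℕ => (⟨n, lt_trans (Ordinal.nat_lt_omega0 n) omega0_lt_ω1⟩ : Iw))
    (fun a b hab => Nat.cast_injective (congrArg Subtype.val hab))

section Fam
variable {X : Set ℕ} (hX : X.Infinite)

include hX in
lemma famAI_inj : Function.Injective (fun α : Iw => famA X α.1) := by
  intro a b hab
  by_contra hne
  exact famA_inj hX a.2 b.2 (fun h => hne (Subtype.ext h)) hab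

include hX in
lemma fam_AD : ADFamily (fam X) := by
  refine ⟨Set.infinite_range_of_injective (famAI_inj hX), ?_, ?_⟩
  · rintro A ⟨α, rfl⟩; exact famA_infinite hX α.2
  · rintro A ⟨α, rfl⟩ B ⟨β, rfl⟩ hAB
    have hne : α.1 ≠ β.1 := fun h => hAB (congrArg (famA X) h)
    rcases lt_or_gt_of_ne hne with h | h
    · rw [Set.inter_comm]; exact famA_inter_finite hX β.2 h
    · exact famA_inter_finite hX α.2 h

include hX in
lemma fam_luzin : IsLuzinFamily (fam X) := by
  refine ⟨fun α : Iw => famA X α.1, famAI_inj hX, rfl, ?_⟩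
  intro α n
  have hfin := famA_luzin hX α.2 n
  apply Set.Finite.subset
    (hfin.preimage (Function.Injective.injOn Subtype.val_injective))
  rintro β ⟨h1, h2⟩
  exact ⟨Subtype.coe_lt_coe.mpr h1, h2⟩

end Fam

lemma countable_below {δ : Ordinal.{0}} (hδ : δ < ω1) :
    {β : Iw | β.1 < δ}.Countable := by
  rw [← Cardinal.le_aleph0_iff_set_countable]
  have hinj : Function.Injective
      (fun b : {β : Iw | β.1 < δ} => (⟨b.1.1, b.2⟩ : Set.Iio δ)) := by
    intro a b hab
    simp only [Subtype.mk.injEq] at hab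
    exact Subtype.ext (Subtype.ext (congrArg (fun z : Set.Iio δ => z.1) hab))
  have h1 := Cardinal.mk_le_of_injective hinj
  have h3 : δ.card ≤ ℵ₀ := by
    have := Cardinal.lt_ord.mp hδ
    rwa [← Cardinal.succ_aleph0, Order.lt_succ_iff] at this
  calc #_ ≤ #(Set.Iio δ) := h1
    _ = Cardinal.lift.{1} δ.card := Ordinal.mk_Iio_ordinal δ
    _ ≤ Cardinal.lift.{1} ℵ₀ := Cardinal.lift_le.mpr h3
    _ = ℵ₀ := Cardinal.lift_aleph0

lemma not_countable_univ : ¬ (Set.univ : Set Iw).Countable := by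
  intro h
  rw [← Cardinal.le_aleph0_iff_set_countable, Cardinal.mk_univ] at h
  have hIw : #Iw = Cardinal.lift.{1} ω1.card := by
    refine Eq.trans ?_ (Ordinal.mk_Iio_ordinal ω1)
    exact Cardinal.mk_congr (Equiv.subtypeEquivRight (fun _ => Iff.rfl))
  have hcard : ω1.card = Cardinal.aleph 1 := Cardinal.card_ord _
  rw [hIw, hcard, ← Cardinal.lift_aleph0.{1,0}, Cardinal.lift_le] at h
  exact absurd h (not_le.mpr Cardinal.aleph0_lt_aleph_one)

lemma exists_uncountable_fiber {ι : Type} [Countable ι] (c : Iw → ι) (W : Set Iw)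
    (hW : W.Countable) : ∃ p : ι, ¬ {α : Iw | α ∉ W ∧ c α = p}.Countable := by
  by_contra h
  push_neg at h
  apply not_countable_univ
  have hsub : (Set.univ : Set Iw) ⊆ W ∪ ⋃ p : ι, {α | α ∉ W ∧ c α = p} := by
    intro α _
    by_cases hα : α ∈ W
    · exact Or.inl hα
    · exact Or.inr (Set.mem_iUnion.mpr ⟨c α, hα, rfl⟩)
  exact Set.Countable.mono hsub (hW.union (Set.countable_iUnion h))

lemma exists_big {S : Set Iw} (hS : ¬ S.Countable) :
    ∃ α ∈ S, ¬ α.1 < Ordinal.omega0 ∧ {β : Iw | β ∈ S ∧ β.1 < α.1}.Infinite := by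
  have hSinf : S.Infinite := fun h => hS h.countable
  let f := hSinf.natEmbedding
  set δ : Ordinal.{0} := ⨆ n : ℕ, ((f n : ↥S) : Iw).1 with hδdef
  have hδ : δ < ω1 := by
    apply Ordinal.iSup_lt_ord ?_ (fun n => ((f n : ↥S) : Iw).2)
    show #ℕ < (Cardinal.aleph 1).ord.cof
    rw [Cardinal.isRegular_aleph_one.cof_eq, Cardinal.mk_nat]
    exact Cardinal.aleph0_lt_aleph_one
  have hδ1 : δ + 1 < ω1 := by
    have h3 : δ.card ≤ ℵ₀ := by
      have := Cardinal.lt_ord.mp hδ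
      rwa [← Cardinal.succ_aleph0, Order.lt_succ_iff] at this
    have h4 : (δ + 1).card < Cardinal.aleph 1 := by
      rw [Ordinal.card_add, Ordinal.card_one]
      calc δ.card + 1 ≤ ℵ₀ + ℵ₀ :=
            add_le_add h3 (le_of_lt Cardinal.one_lt_aleph0)
        _ = ℵ₀ := Cardinal.aleph0_add_aleph0
        _ < Cardinal.aleph 1 := Cardinal.aleph0_lt_aleph_one
    exact Cardinal.lt_ord.mpr h4
  set μ : Ordinal.{0} := max (δ + 1) Ordinal.omega0 with hμdef
  have hμ : μ < ω1 := max_lt hδ1 omega0_lt_ω1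
  have hScnt : ¬ S ⊆ {β : Iw | β.1 < μ} := by
    intro hsub
    exact hS (Set.Countable.mono hsub (countable_below hμ))
  obtain ⟨α, hαS, hαnot⟩ := Set.not_subset.mp hScnt
  simp only [Set.mem_setOf_eq, not_lt] at hαnot
  refine ⟨α, hαS, ?_, ?_⟩
  · exact not_lt.mpr (le_trans (le_max_right _ _) hαnot)
  · refine Set.infinite_of_injective_forall_mem
      (f := fun n : ℕ => ((f n : ↥S) : Iw)) ?_ ?_
    · intro a b hab
      exact f.injective (Subtype.ext hab)
    · intro n
      refine ⟨(f n).2, ?_⟩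
      have h1 : ((f n : ↥S) : Iw).1 ≤ δ := Ordinal.le_iSup _ n
      have h2 : δ < μ := lt_of_lt_of_le (Order.lt_succ δ) (by
        rw [hμdef]
        exact le_max_left _ _)
      calc ((f n : ↥S) : Iw).1 ≤ δ := h1
        _ < μ := h2
        _ ≤ α.1 := hαnot

lemma famA_pair_card {Y : Set ℕ} (hY : Y.Infinite) {a b : Ordinal.{0}}
    (ha : a < ω1) (hb : b < ω1) (hne : a ≠ b)
    (h1a : ¬ a < Ordinal.omega0) (h1b : ¬ b < Ordinal.omega0) :
    (famA Y a ∩ famA Y b).ncard ∈ Y := by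
  rcases lt_or_gt_of_ne hne with h | h
  · rw [Set.inter_comm]
    exact famA_ncard_mem hY hb h1b h
  · exact famA_ncard_mem hY ha h1a h

lemma dist_ncard_bound {σ : ℕ → ℕ} (hσ : Function.Injective σ)
    {A A' B B' : Set ℕ} {F G : Finset ℕ}
    (hA : (A ∩ A').Finite) (hB : (B ∩ B').Finite)
    (hF1 : ∀ x ∈ A \ ↑F, σ x ∈ B) (hF2 : ∀ x ∈ A' \ ↑F, σ x ∈ B')
    (hG1 : ∀ y ∈ B \ ↑G, ∃ x ∈ A, σ x = y) (hG2 : ∀ y ∈ B' \ ↑G, ∃ x ∈ A', σ x = y) :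
    Nat.dist ((A ∩ A').ncard) ((B ∩ B').ncard) ≤ F.card + G.card := by
  have h1 : B ∩ B' ⊆ σ '' (A ∩ A') ∪ ↑G := by
    intro z hz
    by_cases hzG : z ∈ (G : Set ℕ)
    · exact Or.inr hzG
    · obtain ⟨a, ha, haz⟩ := hG1 z ⟨hz.1, hzG⟩
      obtain ⟨a', ha', haz'⟩ := hG2 z ⟨hz.2, hzG⟩
      have : a = a' := hσ (by rw [haz, haz'])
      subst this
      exact Or.inl ⟨a, ⟨ha, ha'⟩, haz⟩
  have h2 : σ '' (A ∩ A') ⊆ (B ∩ B') ∪ σ '' ↑F := by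
    rintro z ⟨a, ⟨ha, ha'⟩, rfl⟩
    by_cases haF : a ∈ (F : Set ℕ)
    · exact Or.inr ⟨a, haF, rfl⟩
    · exact Or.inl ⟨hF1 a ⟨ha, haF⟩, hF2 a ⟨ha', haF⟩⟩
  have e : (σ '' (A ∩ A')).ncard = (A ∩ A').ncard := Set.ncard_image_of_injective _ hσ
  have u1 : (B ∩ B').ncard ≤ (A ∩ A').ncard + G.card := by
    calc (B ∩ B').ncard ≤ (σ '' (A ∩ A') ∪ ↑G).ncard :=
          Set.ncard_le_ncard h1 ((hA.image σ).union (G.finite_toSet))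
      _ ≤ (σ '' (A ∩ A')).ncard + (↑G : Set ℕ).ncard := Set.ncard_union_le _ _
      _ = (A ∩ A').ncard + G.card := by rw [e, Set.ncard_coe_finset]
  have u2 : (A ∩ A').ncard ≤ (B ∩ B').ncard + F.card := by
    calc (A ∩ A').ncard = (σ '' (A ∩ A')).ncard := e.symm
      _ ≤ ((B ∩ B') ∪ σ '' ↑F).ncard :=
          Set.ncard_le_ncard h2 (hB.union ((F.finite_toSet).image σ))
      _ ≤ (B ∩ B').ncard + (σ '' ↑F).ncard := Set.ncard_union_le _ _
      _ ≤ (B ∩ B').ncard + F.card := by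
          have := Set.ncard_image_le (f := σ) (F.finite_toSet)
          rw [Set.ncard_coe_finset] at this
          omega
  simp only [Nat.dist]
  omega

/-- The main non-homeomorphism lemma -/
lemma no_homeo {r s : Set ℕ} (hrs : r ≠ s) :
    ¬ Nonempty (@Homeomorph (ℕ ⊕ ↥(fam (Xset r))) (ℕ ⊕ ↥(fam (Xset s)))
      (psiTop (fam (Xset r))) (psiTop (fam (Xset s)))) := by
  intro hne
  set X := Xset r with hXdef
  set Y := Xset s with hYdef
  have hX : X.Infinite := Xset_infinite r
  have hY : Y.Infinite := Xset_infinite s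
  obtain ⟨σ, ρ, hσinj, hρinj, hFG⟩ :=
    homeo_extract (fam_AD hX).2.1 (fam_AD hY).2.1 hne
  -- AX α is the member of the X-family with index α
  set AX : Iw → ↥(fam X) := fun α => ⟨famA X α.1, ⟨α, rfl⟩⟩ with hAXdef
  have hAXinj : Function.Injective AX := by
    intro a b hab
    by_contra hne'
    exact famA_inj hX a.2 b.2 (fun h => hne' (Subtype.ext h))
      (congrArg Subtype.val hab)
  -- index γ of the image family member
  have hρmem : ∀ α : Iw, ∃ β : Iw, famA Y β.1 = (ρ (AX α) : Set ℕ) := fun α => (ρ (AX α)).2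
  choose γ hγ using hρmem
  have hγinj : Function.Injective γ := by
    intro a b hab
    apply hAXinj
    apply hρinj
    apply Subtype.ext
    rw [← hγ a, ← hγ b, hab]
  choose F G hF hG using hFG
  -- pigeonhole on the defects and on γ being below ω
  set W : Set Iw := {α : Iw | (γ α).1 < Ordinal.omega0} with hWdef
  have hWcnt : W.Countable := by
    have : W = γ ⁻¹' {β : Iw | β.1 < Ordinal.omega0} := rfl
    rw [this]
    exact Set.Countable.preimage (countable_below omega0_lt_ω1) hγinj
  obtain ⟨p, hp⟩ := exists_uncountable_fiber
    (fun α => ((F (AX α), G (AX α)) : Finset ℕ × Finset ℕ)) W hWcnt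
  set Sp := {α : Iw | α ∉ W ∧ (F (AX α), G (AX α)) = p} with hSpdef
  obtain ⟨α0, hα0S, hα0ω, hTinf⟩ := exists_big hp
  set T := {β : Iw | β ∈ Sp ∧ β.1 < α0.1} with hTdef
  -- separation constant
  set c0 : ℕ := p.1.card + p.2.card with hc0def
  obtain ⟨N, hN⟩ := Xset_sep hrs c0
  -- pick β ∈ T with large intersection
  have hsz := famA_sizes hX α0.2 hα0ω N
  have hTval : (Subtype.val '' T).Infinite :=
    Set.Infinite.image (Function.Injective.injOn Subtype.val_injective) hTinf
  have hnonempty : ((Subtype.val '' T) \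
      {β : Ordinal.{0} | β < α0.1 ∧ (famA X α0.1 ∩ famA X β).ncard ≤ N}).Nonempty :=
    (hTval.diff hsz).nonempty
  obtain ⟨b, ⟨β, hβT, rfl⟩, hbnot⟩ := hnonempty
  have hβlt : β.1 < α0.1 := hβT.2
  have hxbig : N < (famA X α0.1 ∩ famA X β.1).ncard := by
    by_contra hle
    exact hbnot ⟨hβlt, le_of_not_gt hle⟩
  -- the two intersection numbers
  set x := (famA X α0.1 ∩ famA X β.1).ncard with hxdef
  set y := (famA Y (γ α0).1 ∩ famA Y (γ β).1).ncard with hydef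
  have hxX : x ∈ X := famA_ncard_mem hX α0.2 hα0ω hβlt
  have hyY : y ∈ Y := by
    apply famA_pair_card hY (γ α0).2 (γ β).2
    · intro h
      exact absurd (congrArg Subtype.val (hγinj (Subtype.ext h)))
        (ne_of_gt hβlt)
    · exact hα0S.1
    · exact hβT.1.1
  -- the defects of α0 and β are both p
  have hpα0 : F (AX α0) = p.1 ∧ G (AX α0) = p.2 := by
    have := hα0S.2
    exact ⟨congrArg Prod.fst this, congrArg Prod.snd this⟩
  have hpβ : F (AX β) = p.1 ∧ G (AX β) = p.2 := by
    have := hβT.1.2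
    exact ⟨congrArg Prod.fst this, congrArg Prod.snd this⟩
  -- distance bound
  have hdist : Nat.dist x y ≤ c0 := by
    rw [hxdef, hydef, hc0def]
    apply dist_ncard_bound hσinj
      (famA_inter_finite hX α0.2 hβlt)
      (by
        rcases lt_or_gt_of_ne (fun h : (γ α0).1 = (γ β).1 =>
          absurd (congrArg Subtype.val (hγinj (Subtype.ext h))) (ne_of_gt hβlt)) with h | h
        · rw [Set.inter_comm]; exact famA_inter_finite hY (γ β).2 h
        · exact famA_inter_finite hY (γ α0).2 h)
    · -- hF1
      intro z hz
      have := hF (AX α0) z (by rw [hpα0.1]; exact hz)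
      rwa [← hγ α0] at this
    · intro z hz
      have := hF (AX β) z (by rw [hpβ.1]; exact hz)
      rwa [← hγ β] at this
    · intro z hz
      have := hG (AX α0) z (by rw [hpα0.2, ← hγ α0] at *; exact hz)
      exact this
    · intro z hz
      have := hG (AX β) z (by rw [hpβ.2, ← hγ β] at *; exact hz)
      exact this
  have := hN x hxX (by omega) y hyY
  omega

lemma fam_injective : Function.Injective (fun r : Set ℕ => fam (Xset r)) := by
  intro r s h
  by_contra hrs
  apply no_homeo hrs
  refine ⟨?_⟩
  have e : fam (Xset r) = fam (Xset s) := h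
  rw [← e]
  exact @Homeomorph.refl _ (psiTop (fam (Xset r)))

end LZ
end

open LZ in
/-- Theorem 13: there are 𝔠 many Luzin AD families with pairwise
non-homeomorphic Ψ-spaces. -/
theorem exists_continuum_luzin_families :
    ∃ 𝒮 : Set (Set (Set ℕ)), Cardinal.mk ↥𝒮 = Cardinal.continuum ∧
      (∀ 𝒜 ∈ 𝒮, ADFamily 𝒜 ∧ IsLuzinFamily 𝒜) ∧
      (∀ 𝒜 ∈ 𝒮, ∀ ℬ ∈ 𝒮, 𝒜 ≠ ℬ →
        ¬ Nonempty (@Homeomorph (ℕ ⊕ ↥𝒜) (ℕ ⊕ ↥ℬ) (psiTop 𝒜) (psiTop ℬ))) := by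
  refine ⟨Set.range (fun r : Set ℕ => fam (Xset r)), ?_, ?_, ?_⟩
  · rw [Cardinal.mk_range_eq _ fam_injective, Cardinal.mk_set, Cardinal.mk_nat,
      Cardinal.two_power_aleph0]
  · rintro 𝒜 ⟨r, rfl⟩
    exact ⟨fam_AD (Xset_infinite r), fam_luzin (Xset_infinite r)⟩
  · rintro 𝒜 ⟨r, rfl⟩ ℬ ⟨s, rfl⟩ hne
    exact no_homeo (fun h => hne (congrArg (fun t => fam (Xset t)) h))
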